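/- Let f : F_{p^n} → F_p be quadratic (algebraic degree at most 2). Then f is balanced if and only if there exists a ∈ F_{p^n} such that the derivative D_a f(x) = f(x+a) − f(x) is a nonzero constant function. -/

import Mathlib

open Finset
open scoped Classical

noncomputable instance (p n : ℕ) [Fact p.Prime] : Fintype (GaloisField p n) :=
  Fintype.ofFinite _

noncomputable def omg (p : ℕ) : ℂ := Complex.exp (2 * Real.pi * Complex.I / p)

noncomputable def ee (p : ℕ) (c : ZMod p) : ℂ := omg p ^ c.val

noncomputable def Tr (p n : ℕ) [Fact p.Prime] (x : GaloisField p n) : ZMod p :=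
  Algebra.trace (ZMod p) (GaloisField p n) x

noncomputable def W (p n : ℕ) [Fact p.Prime] (f : GaloisField p n → ZMod p)
    (y : GaloisField p n) : ℂ :=
  ∑ x : GaloisField p n, ee p (f x - Tr p n (x * y))

noncomputable def D (p n : ℕ) [Fact p.Prime] (a : GaloisField p n) (f : GaloisField p n → ZMod p)
    (x : GaloisField p n) : ZMod p :=
  f (x + a) - f x

noncomputable def D2 (p n : ℕ) [Fact p.Prime] (a b : GaloisField p n) (f : GaloisField p n → ZMod p)
    (x : GaloisField p n) : ZMod p :=
  f (x + a + b) - f (x + a) - f (x + b) + f x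

def IsBalanced (p n : ℕ) [Fact p.Prime] (f : GaloisField p n → ZMod p) : Prop :=
  ∀ c : ZMod p, (Finset.univ.filter (fun x => f x = c)).card = p ^ (n - 1)

def Bent (p n : ℕ) [Fact p.Prime] (f : GaloisField p n → ZMod p) : Prop :=
  ∀ y : GaloisField p n, ‖W p n f y‖ ^ 2 = (p : ℝ) ^ n

def IsQuadratic (p n : ℕ) [Fact p.Prime] (f : GaloisField p n → ZMod p) : Prop :=
  ∀ a b : GaloisField p n, ∃ c : ZMod p, ∀ x, D2 p n a b f x = c

def IsCubic (p n : ℕ) [Fact p.Prime] (f : GaloisField p n → ZMod p) : Prop :=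
  ∀ a b c : GaloisField p n, ∃ l : ZMod p, ∀ x, D2 p n b c f (x + a) - D2 p n b c f x = l

lemma cardGF (p n : ℕ) [Fact p.Prime] :
    Fintype.card (GaloisField p n) = p * p ^ (n - 1) := by
  rcases Nat.eq_zero_or_pos n with h | h
  · subst h
    norm_num
    have hsf : Algebra.adjoin (ZMod p)
        ((Polynomial.X ^ p ^ 0 - Polynomial.X : Polynomial (ZMod p)).rootSet (GaloisField p 0)) = ⊤ :=
      @Polynomial.IsSplittingField.adjoin_rootSet _ _ _ _ _ _ (Polynomial.IsSplittingField.splittingField _)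
    simp only [pow_zero, pow_one, sub_self, Polynomial.rootSet_zero,
      Algebra.adjoin_empty] at hsf
    have hsurj : Function.Surjective (algebraMap (ZMod p) (GaloisField p 0)) := by
      intro x
      have hx : x ∈ (⊥ : Subalgebra (ZMod p) (GaloisField p 0)) := by
        rw [hsf]; trivial
      rwa [Algebra.mem_bot] at hx
    have hbij : Function.Bijective (algebraMap (ZMod p) (GaloisField p 0)) :=
      ⟨(algebraMap (ZMod p) (GaloisField p 0)).injective, hsurj⟩
    rw [← Fintype.card_of_bijective hbij, ZMod.card]
  · have hc := GaloisField.card p n h.ne'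
    rw [Nat.card_eq_fintype_card] at hc
    rw [hc, ← pow_succ']
    congr 1
    omega

/-- If shifting by `b` adds a nonzero constant `l` to `g`, then `g` is balanced. -/
lemma shiftBalanced (p n : ℕ) [Fact p.Prime] (g : GaloisField p n → ZMod p)
    (b : GaloisField p n) (l : ZMod p) (hl : l ≠ 0)
    (h : ∀ x, g (x + b) = g x + l) (c : ZMod p) :
    (Finset.univ.filter (fun x => g x = c)).card = p ^ (n - 1) := by
  have hp : p.Prime := Fact.out
  set e : ZMod p → ℕ := fun c => (Finset.univ.filter (fun x => g x = c)).card with he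
  have hstep : ∀ c : ZMod p, e (c + l) = e c := by
    intro c
    apply Finset.card_bij' (fun y _ => y - b) (fun x _ => x + b)
    · intro y hy
      simp only [mem_filter, mem_univ, true_and] at hy ⊢
      have := h (y - b)
      rw [sub_add_cancel] at this
      rw [hy] at this
      have : g (y - b) = c := by
        have := this.symm
        exact add_right_cancel this
      exact this
    · intro x hx
      simp only [mem_filter, mem_univ, true_and] at hx ⊢
      rw [h x, hx]
    · intro y _; exact sub_add_cancel y b
    · intro x _; exact add_sub_cancel_right x b
  have hiter : ∀ (k : ℕ) (c : ZMod p), e (c + (k : ZMod p) * l) = e c := by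
    intro k
    induction k with
    | zero => intro c; simp
    | succ k ih =>
      intro c
      have : c + ((k + 1 : ℕ) : ZMod p) * l = (c + (k : ZMod p) * l) + l := by
        push_cast; ring
      rw [this, hstep, ih]
  have hall : ∀ c c' : ZMod p, e c = e c' := by
    intro c c'
    have hkey : (((( (c' - c) * l⁻¹ ).val : ℕ) : ZMod p)) = (c' - c) * l⁻¹ :=
      ZMod.natCast_rightInverse _
    have := hiter ((c' - c) * l⁻¹).val c
    rw [hkey] at this
    have hml : (c' - c) * l⁻¹ * l = c' - c := by
      rw [mul_assoc, inv_mul_cancel₀ hl, mul_one]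
    rw [hml] at this
    simp at this
    exact this.symm
  have hsum : ∑ c : ZMod p, e c = Fintype.card (GaloisField p n) := by
    rw [← Finset.card_univ]
    exact (Finset.card_eq_sum_card_fiberwise (fun x _ => Finset.mem_univ (g x))).symm
  have hconst : ∑ c' : ZMod p, e c' = p * e c := by
    calc ∑ c' : ZMod p, e c' = ∑ _c' : ZMod p, e c := by
          exact Finset.sum_congr rfl (fun c' _ => hall c' c)
      _ = p * e c := by rw [Finset.sum_const, Finset.card_univ, ZMod.card, smul_eq_mul]
  have : p * e c = p * p ^ (n - 1) := by
    rw [← hconst, hsum, cardGF]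
  exact Nat.eq_of_mul_eq_mul_left hp.pos this

theorem stmt_7 (p n : ℕ) [Fact p.Prime] (f : GaloisField p n → ZMod p)
    (hf : IsQuadratic p n f) :
    IsBalanced p n f ↔
      ∃ a : GaloisField p n, ∃ l : ZMod p, l ≠ 0 ∧ ∀ x, D p n a f x = l := by
  have hp : p.Prime := Fact.out
  constructor
  · intro hbal
    -- the "radical" predicate
    set P : GaloisField p n → Prop := fun a => ∀ x, f (x + a) - f x = f a - f 0 with hP
    set e : GaloisField p n → ZMod p → ℕ :=
      fun a c => (Finset.univ.filter (fun x => f (x + a) - f x = c)).card with he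
    -- non-radical directions give balanced derivatives
    have claim1 : ∀ a c, ¬ P a → e a c = p ^ (n - 1) := by
      intro a c hna
      have hna2 : ¬ ∀ x, f (x + a) - f x = f a - f 0 := hna
      push_neg at hna2
      obtain ⟨x₀, hx₀⟩ := hna2
      set g : GaloisField p n → ZMod p := fun x => f (x + a) - f x with hg
      obtain ⟨c2, hc2⟩ := hf a x₀
      have hshift : ∀ y, g (y + x₀) = g y + c2 := by
        intro y
        have := hc2 y
        simp only [D2] at this
        have harg : y + a + x₀ = y + x₀ + a := by ring
        rw [harg] at this
        simp only [hg]
        linear_combination this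
      have hne : c2 ≠ 0 := by
        intro hz
        have := hshift 0
        rw [hz, add_zero, zero_add] at this
        apply hx₀
        simp only [hg, zero_add] at this
        rw [this]
      exact shiftBalanced p n g x₀ c2 hne hshift c
    -- radical directions: derivative is constant
    have claim2 : ∀ a c, P a → e a c = if f a - f 0 = c then Fintype.card (GaloisField p n) else 0 := by
      intro a c ha
      by_cases hc : f a - f 0 = c
      · rw [if_pos hc, he]
        simp only
        rw [Finset.filter_true_of_mem (fun x _ => by rw [ha x, hc]), Finset.card_univ]
      · rw [if_neg hc, he]
        simp only
        rw [Finset.filter_false_of_mem (fun x _ => by rw [ha x]; exact hc), Finset.card_empty]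
    set q := Fintype.card (GaloisField p n) with hq
    set m : ZMod p → ℕ :=
      fun c => (Finset.univ.filter (fun a => P a ∧ f a - f 0 = c)).card with hm
    set K := (Finset.univ.filter (fun a => ¬ P a)).card with hK
    -- double counting
    have count : ∀ c : ZMod p, q * p ^ (n - 1) = q * m c + K * p ^ (n - 1) := by
      intro c
      have lhs : ∑ a : GaloisField p n, e a c = q * p ^ (n - 1) := by
        have swap : ∑ a : GaloisField p n, e a c
            = ∑ x : GaloisField p n,
                (Finset.univ.filter (fun a => f (x + a) - f x = c)).card := by
          simp only [he, Finset.card_filter]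
          exact Finset.sum_comm
        rw [swap]
        have inner : ∀ x : GaloisField p n,
            (Finset.univ.filter (fun a => f (x + a) - f x = c)).card = p ^ (n - 1) := by
          intro x
          have hbij : (Finset.univ.filter (fun a => f (x + a) - f x = c)).card
              = (Finset.univ.filter (fun y => f y = c + f x)).card := by
            apply Finset.card_bij' (fun a _ => x + a) (fun y _ => y - x)
            · intro a ha
              simp only [mem_filter, mem_univ, true_and] at ha ⊢
              rw [← ha]; ring
            · intro y hy
              simp only [mem_filter, mem_univ, true_and] at hy ⊢
              rw [add_sub_cancel]
              rw [hy]; ring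
            · intro a _; ring
            · intro y _; ring
          rw [hbij, hbal (c + f x)]
        rw [Finset.sum_congr rfl (fun x _ => inner x), Finset.sum_const, Finset.card_univ,
          smul_eq_mul]
      have rhs : ∑ a : GaloisField p n, e a c = q * m c + K * p ^ (n - 1) := by
        rw [← Finset.sum_filter_add_sum_filter_not Finset.univ P (fun a => e a c)]
        congr 1
        · have : ∀ a ∈ Finset.univ.filter P,
              e a c = if f a - f 0 = c then q else 0 := by
            intro a ha
            simp only [mem_filter] at ha
            exact claim2 a c ha.2
          rw [Finset.sum_congr rfl this, ← Finset.sum_filter, Finset.filter_filter,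
            Finset.sum_const, smul_eq_mul, hm]
          ring
        · have : ∀ a ∈ Finset.univ.filter (fun a => ¬ P a),
              e a c = p ^ (n - 1) := by
            intro a ha
            simp only [mem_filter] at ha
            exact claim1 a c ha.2
          rw [Finset.sum_congr rfl this, Finset.sum_const, smul_eq_mul, hK]
      rw [← lhs, rhs]
    have hqpos : 0 < q := Fintype.card_pos
    have hm01 : m 0 = m 1 := by
      have h0 := count 0
      have h1 := count 1
      have : q * m 0 = q * m 1 := by omega
      exact Nat.eq_of_mul_eq_mul_left hqpos this
    have hm0 : 0 < m 0 := by
      rw [hm]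
      apply Finset.card_pos.mpr
      refine ⟨0, ?_⟩
      simp only [mem_filter, mem_univ, true_and]
      constructor
      · intro x; rw [add_zero, sub_self, sub_self]
      · rw [sub_self]
    have hm1 : 0 < m 1 := hm01 ▸ hm0
    obtain ⟨a, ha⟩ := Finset.card_pos.mp hm1
    simp only [hm, mem_filter, mem_univ, true_and] at ha
    refine ⟨a, 1, one_ne_zero, fun x => ?_⟩
    show f (x + a) - f x = 1
    rw [ha.1 x, ha.2]
  · rintro ⟨a, l, hl, hD⟩
    intro c
    apply shiftBalanced p n f a l hl (fun x => ?_) c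
    have := hD x
    simp only [D] at this
    linear_combination this
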